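/- arXiv:2510.17182 — 2 statements merged into one kernel-verified Lean document; each statement's English description precedes it below -/
import Mathlib

section
/- Let F be a set of edges with capacities c : F → ℝ≥0, let d = vol_F be the vertex measure d(v) = Σ_{e ∈ F incident to v} c(e), and let d' ≤ d satisfy ‖d'‖₁ ≥ 0.8·‖d‖₁. Let F' ⊆ F be the set of edges not incident to any vertex in U = {v : d'(v) ≤ d(v)/2}. Then vol_{F'}(v) ≤ 2·d'(v) for all v, and c(F') ≥ 0.2 · c(F). -/
/-- Let F be a set of edges with positive capacities, no self-loops,
d = vol_F, and d' ≤ d with ‖d'‖₁ ≥ 0.8·‖d‖₁. Let F' ⊆ F be the edges not incident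
to any vertex of U = {v : d'(v) ≤ d(v)/2}. Then vol_{F'}(v) ≤ 2·d'(v) for all v and
c(F') ≥ 0.2·c(F). -/
theorem stmt3 (V E : Type*) [Fintype V] [Fintype E] [DecidableEq V]
    (tail head : E → V) (F : Finset E) (c : E → ℝ)
    (hc : ∀ e ∈ F, 0 < c e) (hloop : ∀ e ∈ F, tail e ≠ head e)
    (d' : V → ℝ) (hd'0 : ∀ v, 0 ≤ d' v)
    (hle : ∀ v, d' v ≤ ∑ e ∈ F.filter (fun e => tail e = v ∨ head e = v), c e)
    (hsum : 0.8 * ∑ v, ∑ e ∈ F.filter (fun e => tail e = v ∨ head e = v), c e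
      ≤ ∑ v, d' v) :
    let d : V → ℝ := fun v => ∑ e ∈ F.filter (fun e => tail e = v ∨ head e = v), c e
    let U : Finset V := Finset.univ.filter (fun v => d' v ≤ d v / 2)
    let F' : Finset E := F.filter (fun e => tail e ∉ U ∧ head e ∉ U)
    (∀ v, ∑ e ∈ F'.filter (fun e => tail e = v ∨ head e = v), c e ≤ 2 * d' v)
    ∧ 0.2 * ∑ e ∈ F, c e ≤ ∑ e ∈ F', c e := by
  intro d U F'
  have hd0 : ∀ v, 0 ≤ d v := fun v =>
    Finset.sum_nonneg fun e he => (hc e (Finset.mem_filter.mp he).1).le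
  constructor
  · intro v
    by_cases hv : v ∈ U
    · have hemp : F'.filter (fun e => tail e = v ∨ head e = v) = ∅ := by
        rw [Finset.filter_eq_empty_iff]
        intro e he
        obtain ⟨_, ht, hh⟩ := Finset.mem_filter.mp he
        rintro (rfl | rfl)
        exacts [ht hv, hh hv]
      rw [hemp, Finset.sum_empty]
      linarith [hd'0 v]
    · have hv' : d v / 2 < d' v := by
        simp only [U, Finset.mem_filter, Finset.mem_univ, true_and, not_le] at hv
        exact hv
      have hsub : ∑ e ∈ F'.filter (fun e => tail e = v ∨ head e = v), c e ≤ d v := by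
        apply Finset.sum_le_sum_of_subset_of_nonneg
        · exact Finset.monotone_filter_left _ (Finset.filter_subset _ _)
        · intro e he _; exact (hc e (Finset.mem_filter.mp he).1).le
      linarith
  · -- double counting: ∑ v, d v = 2 * ∑ e ∈ F, c e
    have hsplit : ∀ e ∈ F, ∀ v : V,
        (if tail e = v ∨ head e = v then c e else 0)
        = (if tail e = v then c e else 0) + (if head e = v then c e else 0) := by
      intro e he v
      have hne := hloop e he
      by_cases h1 : tail e = v <;> by_cases h2 : head e = v <;> simp_all
    have hS : ∑ v, d v = 2 * ∑ e ∈ F, c e := by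
      simp only [d, Finset.sum_filter]
      rw [Finset.sum_comm, Finset.mul_sum]
      refine Finset.sum_congr rfl fun e he => ?_
      rw [Finset.sum_congr rfl fun v _ => hsplit e he v, Finset.sum_add_distrib,
        Finset.sum_ite_eq, Finset.sum_ite_eq]
      simp; ring
    have hdU : ∀ v ∈ U, d v ≤ 2 * (d v - d' v) := by
      intro v hv
      simp only [U, Finset.mem_filter, Finset.mem_univ, true_and] at hv
      linarith
    have hU : ∑ v ∈ U, d v ≤ 2 * (∑ v, d v - ∑ v, d' v) := by
      calc ∑ v ∈ U, d v ≤ ∑ v ∈ U, 2 * (d v - d' v) := Finset.sum_le_sum hdU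
        _ ≤ ∑ v, 2 * (d v - d' v) := by
            apply Finset.sum_le_sum_of_subset_of_nonneg (Finset.subset_univ U)
            intro v _ _; have := hle v; simp only [d]; linarith
        _ = 2 * (∑ v, d v - ∑ v, d' v) := by
            rw [← Finset.mul_sum, Finset.sum_sub_distrib]
    have hrem : ∑ e ∈ F.filter (fun e => ¬(tail e ∉ U ∧ head e ∉ U)), c e ≤ ∑ v ∈ U, d v := by
      have hRHS : ∑ v ∈ U, d v
          = ∑ e ∈ F, ∑ v ∈ U, (if tail e = v ∨ head e = v then c e else 0) := by
        simp only [d, Finset.sum_filter]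
        exact Finset.sum_comm
      rw [hRHS]
      have h1 : ∑ e ∈ F.filter (fun e => ¬(tail e ∉ U ∧ head e ∉ U)), c e
          ≤ ∑ e ∈ F.filter (fun e => ¬(tail e ∉ U ∧ head e ∉ U)), ∑ v ∈ U, (if tail e = v ∨ head e = v then c e else 0) := by
        apply Finset.sum_le_sum
        intro e he
        obtain ⟨heF, heF'⟩ := Finset.mem_filter.mp he
        have : tail e ∈ U ∨ head e ∈ U := by
          by_contra h
          push_neg at h
          exact heF' ⟨h.1, h.2⟩
        obtain hU' | hU' := this
        · calc c e = (if tail e = tail e ∨ head e = tail e then c e else 0) := by simp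
            _ ≤ _ := Finset.single_le_sum (f := fun v => if tail e = v ∨ head e = v then c e else 0)
                (fun v _ => by (try dsimp only); split <;> [exact (hc e heF).le; exact le_rfl]) hU'
        · calc c e = (if tail e = head e ∨ head e = head e then c e else 0) := by simp
            _ ≤ _ := Finset.single_le_sum (f := fun v => if tail e = v ∨ head e = v then c e else 0)
                (fun v _ => by (try dsimp only); split <;> [exact (hc e heF).le; exact le_rfl]) hU'
      refine h1.trans ?_
      apply Finset.sum_le_sum_of_subset_of_nonneg (Finset.filter_subset _ _)
      intro e he _
      exact Finset.sum_nonneg fun v _ => by split <;> [exact (hc e he).le; exact le_rfl]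
    have hsdiff : ∑ e ∈ F', c e + ∑ e ∈ F.filter (fun e => ¬(tail e ∉ U ∧ head e ∉ U)), c e = ∑ e ∈ F, c e :=
      Finset.sum_filter_add_sum_filter_not F _ c
    have hsum' : 0.8 * ∑ v, d v ≤ ∑ v, d' v := hsum
    linarith
end

section
/- Let star A_F be a bidirectional star with center r on the tails of a set of edges E_C, where the star edge at the tail of e has capacity ψ·c(e). If a flow f is a sum of flows along simple augmenting paths, each passing through the center r at most once, and the total flow value is |f|, then the total capacity of star edges saturated by f is at most 2|f|; consequently, the set P of edges in E_C whose corresponding star edge is saturated satisfies c(P) ≤ 2|f|/ψ. -/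
/-- Saturated star edges. The star on edge set ι has, for each e : ι,
two directed star edges (e, true) and (e, false) of capacity ψ·c(e). The flow f is a
sum of simple paths p of positive value val p, each using at most two star edges
(uses p). Let g be the induced flow on star edges and |f| = Σ val. Then the total
capacity of saturated star edges is at most 2·|f|, and the set P of edges of ι whose
star edge is saturated satisfies c(P) ≤ 2·|f|/ψ. -/
theorem stmt17 (ι P : Type*) [Fintype ι] [Fintype P] [DecidableEq ι] [DecidableEq P]
    (c : ι → ℝ) (hc : ∀ e, 0 < c e) (ψ : ℝ) (hψ0 : 0 < ψ) (hψ1 : ψ ≤ 1)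
    (val : P → ℝ) (hval : ∀ p, 0 < val p)
    (uses : P → Finset (ι × Bool)) (huses : ∀ p, (uses p).card ≤ 2) :
    let F : ℝ := ∑ p, val p
    let g : ι × Bool → ℝ := fun s => ∑ p ∈ Finset.univ.filter (fun p => s ∈ uses p), val p
    let sat : Finset (ι × Bool) := Finset.univ.filter (fun s => ψ * c s.1 ≤ g s)
    (∑ s ∈ sat, ψ * c s.1 ≤ 2 * F)
    ∧ (∑ e ∈ Finset.univ.filter (fun e : ι => ∃ b, (e, b) ∈ sat), c e ≤ 2 * F / ψ) := by
  intro F g sat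
  have h1 : ∑ s ∈ sat, ψ * c s.1 ≤ ∑ s ∈ sat, g s :=
    Finset.sum_le_sum fun s hs => (Finset.mem_filter.mp hs).2
  have h2 : ∑ s ∈ sat, g s ≤ ∑ s : ι × Bool, g s := by
    apply Finset.sum_le_sum_of_subset_of_nonneg (Finset.filter_subset _ _)
    intro s _ _
    exact Finset.sum_nonneg fun p _ => (hval p).le
  have h3 : ∑ s : ι × Bool, g s = ∑ p, ((uses p).card : ℝ) * val p := by
    show (∑ s : ι × Bool, ∑ p ∈ Finset.univ.filter (fun p => s ∈ uses p), val p) = _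
    simp only [Finset.sum_filter]
    rw [Finset.sum_comm]
    refine Finset.sum_congr rfl fun p _ => ?_
    rw [← Finset.sum_filter, Finset.filter_univ_mem, Finset.sum_const, nsmul_eq_mul]
  have h4 : ∑ p, ((uses p).card : ℝ) * val p ≤ 2 * F := by
    rw [show (2 : ℝ) * F = ∑ p, 2 * val p by rw [Finset.mul_sum]]
    refine Finset.sum_le_sum fun p _ => ?_
    have h : ((uses p).card : ℝ) ≤ 2 := by exact_mod_cast huses p
    nlinarith [hval p]
  have hfirst : ∑ s ∈ sat, ψ * c s.1 ≤ 2 * F := by linarith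
  refine ⟨hfirst, ?_⟩
  have key : ψ * ∑ e ∈ Finset.univ.filter (fun e : ι => ∃ b, (e, b) ∈ sat), c e
      ≤ ∑ s ∈ sat, ψ * c s.1 := by
    rw [Finset.mul_sum]
    have himg : (Finset.univ.filter (fun e : ι => ∃ b, (e, b) ∈ sat)).image
        (fun e => (e, if (e, true) ∈ sat then true else false)) ⊆ sat := by
      intro s hs
      obtain ⟨e, he, rfl⟩ := Finset.mem_image.mp hs
      obtain ⟨b, hb⟩ := (Finset.mem_filter.mp he).2
      by_cases h : (e, true) ∈ sat
      · simpa [h] using h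
      · cases b
        · simpa [h] using hb
        · exact absurd hb h
    calc ∑ e ∈ Finset.univ.filter (fun e : ι => ∃ b, (e, b) ∈ sat), ψ * c e
        = ∑ s ∈ (Finset.univ.filter (fun e : ι => ∃ b, (e, b) ∈ sat)).image
            (fun e => (e, if (e, true) ∈ sat then true else false)), ψ * c s.1 := by
          rw [Finset.sum_image]
          intro a _ b _ hab
          exact congrArg Prod.fst hab
      _ ≤ ∑ s ∈ sat, ψ * c s.1 := by
          refine Finset.sum_le_sum_of_subset_of_nonneg himg fun s _ _ => ?_
          exact mul_nonneg hψ0.le (hc s.1).le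
  rw [le_div_iff₀ hψ0]
  nlinarith [key.trans hfirst]
end
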